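/- Let X ⊂ A^{n+1} be a cubic hypersurface F = L + Q + C = 0 (L linear, Q quadratic, C cubic homogeneous parts) smooth at the origin (L ≠ 0), and X irreducible. Then for generic direction u, the quadratic equation L(u,1) + τ Q(u,1) + τ^2 C(u,1) = 0, whose roots parametrize the two further intersection points of the line τ ↦ (τu, τ) with X, is irreducible over the field k(u_1,...,u_n). -/

import Mathlib

namespace CubicAux

open MvPolynomial

/-! ### Detecting homogeneity via an auxiliary polynomial variable -/

noncomputable def Psi (σ R : Type*) [CommSemiring R] :
    MvPolynomial σ R →+* Polynomial (MvPolynomial σ R) :=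
  eval₂Hom (Polynomial.C.comp MvPolynomial.C)
    (fun i => Polynomial.C (MvPolynomial.X i) * Polynomial.X)

lemma Psi_monomial {σ R : Type*} [CommSemiring R] (α : σ →₀ ℕ) (c : R) :
    Psi σ R (monomial α c) = Polynomial.C (monomial α c) * Polynomial.X ^ α.degree := by
  classical
  rw [Psi, coe_eval₂Hom, eval₂_monomial]
  have h1 : (α.prod fun i e => (Polynomial.C (MvPolynomial.X i : MvPolynomial σ R) *
      Polynomial.X) ^ e)
      = Polynomial.C (α.prod fun i e => (MvPolynomial.X i : MvPolynomial σ R) ^ e)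
        * Polynomial.X ^ α.degree := by
    rw [Finsupp.prod, Finsupp.prod, Finsupp.degree]
    calc ∏ i ∈ α.support, (Polynomial.C (MvPolynomial.X i : MvPolynomial σ R) *
          Polynomial.X) ^ α i
        = ∏ i ∈ α.support, (Polynomial.C ((MvPolynomial.X i : MvPolynomial σ R) ^ α i) *
            Polynomial.X ^ α i) :=
          Finset.prod_congr rfl fun i _ => by rw [mul_pow, Polynomial.C_pow]
      _ = _ := by
          rw [Finset.prod_mul_distrib, ← map_prod, Finset.prod_pow_eq_pow_sum]
          rfl
  rw [h1, RingHom.comp_apply, ← mul_assoc, ← map_mul, ← monomial_eq]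

lemma Psi_coeff_coeff {σ R : Type*} [CommSemiring R] (f : MvPolynomial σ R)
    (j : ℕ) (α : σ →₀ ℕ) :
    MvPolynomial.coeff α ((Psi σ R f).coeff j)
      = if α.degree = j then MvPolynomial.coeff α f else 0 := by
  classical
  conv_lhs => rw [← support_sum_monomial_coeff f]
  rw [map_sum, Polynomial.finset_sum_coeff, MvPolynomial.coeff_sum]
  have hterm : ∀ v : σ →₀ ℕ,
      MvPolynomial.coeff α ((Psi σ R (monomial v (coeff v f))).coeff j)
        = if v.degree = j then (if v = α then coeff v f else 0) else 0 := by
    intro v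
    rw [Psi_monomial, Polynomial.coeff_C_mul, Polynomial.coeff_X_pow]
    by_cases h : v.degree = j
    · rw [if_pos h, if_pos h.symm, mul_one, coeff_monomial]
    · rw [if_neg h, if_neg (Ne.symm h), mul_zero, coeff_zero]
  rw [Finset.sum_congr rfl fun v _ => hterm v]
  by_cases hα : α ∈ f.support
  · rw [Finset.sum_eq_single_of_mem α hα]
    · rw [if_pos rfl]
    · intro b _ hb
      by_cases h : b.degree = j
      · rw [if_pos h, if_neg hb]
      · rw [if_neg h]
  · rw [Finset.sum_eq_zero, eq_comm]
    · by_cases h : α.degree = j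
      · rw [if_pos h, notMem_support_iff.mp hα]
      · rw [if_neg h]
    · intro b hb
      by_cases h : b.degree = j
      · rw [if_pos h, if_neg (fun hba : b = α => hα (hba ▸ hb))]
      · rw [if_neg h]

lemma Psi_of_isHomogeneous {σ R : Type*} [CommSemiring R] {f : MvPolynomial σ R} {d : ℕ}
    (hf : f.IsHomogeneous d) :
    Psi σ R f = Polynomial.C f * Polynomial.X ^ d := by
  classical
  conv_lhs => rw [← support_sum_monomial_coeff f]
  rw [map_sum]
  have hc : ∀ v ∈ f.support, Psi σ R (monomial v (coeff v f))
      = Polynomial.C (monomial v (coeff v f)) * Polynomial.X ^ d := by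
    intro v hv
    have hdeg : v.degree = d := by
      rw [Finsupp.degree_eq_weight_one]
      exact hf (mem_support_iff.mp hv)
    rw [Psi_monomial, hdeg]
  rw [Finset.sum_congr rfl hc, ← Finset.sum_mul, ← map_sum, support_sum_monomial_coeff]

lemma evalOne_Psi {σ R : Type*} [CommSemiring R] (f : MvPolynomial σ R) :
    Polynomial.eval 1 (Psi σ R f) = f := by
  have h : (Polynomial.evalRingHom (1 : MvPolynomial σ R)).comp (Psi σ R)
      = RingHom.id _ := by
    apply MvPolynomial.ringHom_ext
    · intro r
      simp [Psi]
    · intro i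
      simp [Psi]
  exact RingHom.congr_fun h f

lemma Psi_eq_C_mul_X_pow {σ R : Type*} [CommSemiring R] {f g : MvPolynomial σ R} {d : ℕ}
    (h : Psi σ R f = Polynomial.C g * Polynomial.X ^ d) :
    f.IsHomogeneous d ∧ f = g := by
  constructor
  · intro v hv
    have hco := Psi_coeff_coeff f v.degree v
    rw [if_pos rfl, h, Polynomial.coeff_C_mul, Polynomial.coeff_X_pow] at hco
    by_cases hd : v.degree = d
    · rw [Finsupp.degree_eq_weight_one] at hd
      exact hd
    · exfalso
      rw [if_neg hd, mul_zero, coeff_zero] at hco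
      exact hv hco.symm
  · have := evalOne_Psi f
    rw [h] at this
    simpa using this.symm

lemma poly_eq_C_mul_X_pow {R : Type*} [Semiring R] {p : Polynomial R}
    (h : p.natTrailingDegree = p.natDegree) :
    p = Polynomial.C (p.coeff p.natDegree) * Polynomial.X ^ p.natDegree := by
  ext j
  rw [Polynomial.coeff_C_mul, Polynomial.coeff_X_pow]
  rcases lt_trichotomy j p.natDegree with hj | hj | hj
  · rw [if_neg hj.ne, mul_zero, Polynomial.coeff_eq_zero_of_lt_natTrailingDegree (h ▸ hj)]
  · rw [hj, if_pos rfl, mul_one]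
  · rw [if_neg hj.ne', mul_zero, Polynomial.coeff_eq_zero_of_natDegree_lt hj]

/-- Factors of a nonzero homogeneous polynomial (over a domain) are homogeneous. -/
lemma isHomogeneous_of_mul_isHomogeneous {σ R : Type*} [CommRing R] [IsDomain R]
    {f g : MvPolynomial σ R} {d : ℕ} (hf : f ≠ 0) (hg : g ≠ 0)
    (h : (f * g).IsHomogeneous d) :
    ∃ a b : ℕ, a + b = d ∧ f.IsHomogeneous a ∧ g.IsHomogeneous b := by
  have hPsi := Psi_of_isHomogeneous h
  rw [map_mul] at hPsi
  have hA0 : Psi σ R f ≠ 0 := fun h0 => hf (by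
    have := evalOne_Psi f
    rw [h0, Polynomial.eval_zero] at this
    exact this.symm)
  have hB0 : Psi σ R g ≠ 0 := fun h0 => hg (by
    have := evalOne_Psi g
    rw [h0, Polynomial.eval_zero] at this
    exact this.symm)
  have hfg0 : f * g ≠ 0 := mul_ne_zero hf hg
  have hd1 : (Psi σ R f).natDegree + (Psi σ R g).natDegree = d := by
    rw [← Polynomial.natDegree_mul hA0 hB0, hPsi, Polynomial.natDegree_C_mul_X_pow _ _ hfg0]
  have hd2 : (Psi σ R f).natTrailingDegree + (Psi σ R g).natTrailingDegree = d := by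
    rw [← Polynomial.natTrailingDegree_mul hA0 hB0, hPsi]
    have hC0 : (Polynomial.C (f * g) : Polynomial (MvPolynomial σ R)) ≠ 0 := by
      simpa using hfg0
    rw [Polynomial.natTrailingDegree_mul_X_pow hC0, Polynomial.natTrailingDegree_C, zero_add]
  have ht1 := Polynomial.natTrailingDegree_le_natDegree (Psi σ R f)
  have ht2 := Polynomial.natTrailingDegree_le_natDegree (Psi σ R g)
  have he1 : (Psi σ R f).natTrailingDegree = (Psi σ R f).natDegree := by omega
  have he2 : (Psi σ R g).natTrailingDegree = (Psi σ R g).natDegree := by omega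
  obtain ⟨hfh, -⟩ := Psi_eq_C_mul_X_pow (poly_eq_C_mul_X_pow he1)
  obtain ⟨hgh, -⟩ := Psi_eq_C_mul_X_pow (poly_eq_C_mul_X_pow he2)
  exact ⟨_, _, hd1, hfh, hgh⟩

lemma eq_C_of_isHomogeneous_zero {σ R : Type*} [CommSemiring R] {f : MvPolynomial σ R}
    (hf : f.IsHomogeneous 0) : f = MvPolynomial.C (coeff 0 f) := by
  classical
  ext d
  rcases eq_or_ne d 0 with rfl | hd
  · simp
  · rw [hf.coeff_eq_zero (by simpa [Finsupp.degree_eq_zero_iff] using hd), coeff_C,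
      if_neg (Ne.symm hd)]

lemma isUnit_exists_C {σ R : Type*} [CommRing R] [IsDomain R] {u : MvPolynomial σ R}
    (hu : IsUnit u) : ∃ c : R, u = MvPolynomial.C c := by
  obtain ⟨v, hv⟩ := hu.exists_right_inv
  have h1 : (u * v).IsHomogeneous 0 := by rw [hv]; exact isHomogeneous_one σ R
  have hne : u * v ≠ 0 := by rw [hv]; exact one_ne_zero
  have hu0 : u ≠ 0 := left_ne_zero_of_mul hne
  have hv0 : v ≠ 0 := right_ne_zero_of_mul hne
  obtain ⟨a, b, hab, hua, -⟩ := isHomogeneous_of_mul_isHomogeneous hu0 hv0 h1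
  have ha : a = 0 := by omega
  exact ⟨_, eq_C_of_isHomogeneous_zero (ha ▸ hua)⟩

end CubicAux

namespace CubicAux

open MvPolynomial

variable (k : Type*) [Field k] (n : ℕ)

/-! ### Dehomogenization: set the last variable to `1` -/

noncomputable def D : MvPolynomial (Fin (n + 1)) k →+* MvPolynomial (Fin n) k :=
  eval₂Hom MvPolynomial.C
    (fun i => if h : (i : ℕ) < n then MvPolynomial.X ⟨i, h⟩ else 1)

/-- restriction of an exponent vector to the first `n` variables -/
noncomputable def res (β : Fin (n + 1) →₀ ℕ) : Fin n →₀ ℕ :=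
  Finsupp.comapDomain Fin.castSucc β (Fin.castSucc_injective n).injOn

lemma res_apply (β : Fin (n + 1) →₀ ℕ) (i : Fin n) : res n β i = β i.castSucc := rfl

lemma degree_eq_sum_univ {N : ℕ} (β : Fin N →₀ ℕ) : β.degree = ∑ i, β i :=
  Finset.sum_subset (Finset.subset_univ _) (fun i _ hi => Finsupp.notMem_support_iff.mp hi)

lemma degree_res_add (β : Fin (n + 1) →₀ ℕ) :
    β.degree = (res n β).degree + β (Fin.last n) := by
  rw [degree_eq_sum_univ, degree_eq_sum_univ, Fin.sum_univ_castSucc]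
  simp [res_apply]

lemma D_C (c : k) : D k n (MvPolynomial.C c) = MvPolynomial.C c := by
  rw [D, coe_eval₂Hom, eval₂_C]

lemma D_X_last : D k n (MvPolynomial.X (Fin.last n)) = 1 := by
  rw [D, coe_eval₂Hom, eval₂_X, dif_neg (by simp)]

lemma D_apply (f : MvPolynomial (Fin (n + 1)) k) :
    D k n f = eval₂ MvPolynomial.C
      (fun i : Fin (n + 1) => if h : (i : ℕ) < n then
        (MvPolynomial.X ⟨i, h⟩ : MvPolynomial (Fin n) k) else 1) f := rfl

lemma D_monomial (β : Fin (n + 1) →₀ ℕ) (c : k) :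
    D k n (monomial β c) = monomial (res n β) c := by
  classical
  rw [D, coe_eval₂Hom, eval₂_monomial]
  rw [Finsupp.prod_fintype _ _ (fun i => pow_zero _), Fin.prod_univ_castSucc]
  have hlast : (if h : ((Fin.last n : Fin (n + 1)) : ℕ) < n then
      (MvPolynomial.X ⟨(Fin.last n : Fin (n + 1)), h⟩ : MvPolynomial (Fin n) k) else 1) = 1 := by
    rw [dif_neg]
    simp
  rw [hlast, one_pow, mul_one]
  have hcs : ∀ i : Fin n, (if h : ((i.castSucc : Fin (n + 1)) : ℕ) < n then
      (MvPolynomial.X ⟨(i.castSucc : Fin (n + 1)), h⟩ : MvPolynomial (Fin n) k) else 1)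
        = MvPolynomial.X i := by
    intro i
    rw [dif_pos (by simp)]
    congr 1
  rw [Finset.prod_congr rfl fun i _ => by rw [hcs i]]
  rw [monomial_eq, Finsupp.prod_fintype _ _ (fun i => pow_zero _)]
  rfl


lemma degree_of_mem_support {σ : Type*} {f : MvPolynomial σ k} {d : ℕ}
    (hf : f.IsHomogeneous d) {β : σ →₀ ℕ} (hβ : β ∈ f.support) : β.degree = d := by
  rw [Finsupp.degree_eq_weight_one]
  exact hf (mem_support_iff.mp hβ)

lemma res_inj_on_degree {d : ℕ} {β β' : Fin (n + 1) →₀ ℕ} (hβ : β.degree = d)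
    (hβ' : β'.degree = d) (h : res n β = res n β') : β = β' := by
  have hsum : (res n β).degree = (res n β').degree := by rw [h]
  have h1 := degree_res_add n β
  have h2 := degree_res_add n β'
  ext i
  refine Fin.lastCases ?_ ?_ i
  · omega
  · intro j
    have := DFunLike.congr_fun h j
    rw [res_apply, res_apply] at this
    exact this

lemma D_eq_zero_iff_of_isHomogeneous {d : ℕ} {f : MvPolynomial (Fin (n + 1)) k}
    (hf : f.IsHomogeneous d) (h0 : D k n f = 0) : f = 0 := by
  classical
  by_contra hne
  obtain ⟨β₀, hβ₀⟩ := support_nonempty.mpr hne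
  have hD : D k n f = ∑ β ∈ f.support, monomial (res n β) (coeff β f) := by
    conv_lhs => rw [← support_sum_monomial_coeff f]
    rw [map_sum]
    exact Finset.sum_congr rfl fun β _ => D_monomial k n β (coeff β f)
  have hcoeff : coeff (res n β₀) (D k n f) = coeff β₀ f := by
    rw [hD, MvPolynomial.coeff_sum]
    rw [Finset.sum_eq_single_of_mem β₀ hβ₀]
    · rw [coeff_monomial, if_pos rfl]
    · intro β hβ hne'
      rw [coeff_monomial, if_neg]
      intro hres
      exact hne' (res_inj_on_degree n (degree_of_mem_support k hf hβ)
        (degree_of_mem_support k hf hβ₀) hres)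
  rw [h0, coeff_zero] at hcoeff
  exact (mem_support_iff.mp hβ₀) hcoeff.symm

lemma D_inj_of_isHomogeneous {d : ℕ} {f g : MvPolynomial (Fin (n + 1)) k}
    (hf : f.IsHomogeneous d) (hg : g.IsHomogeneous d) (h : D k n f = D k n g) : f = g := by
  have hsub : (f - g).IsHomogeneous d := hf.sub hg
  have : D k n (f - g) = 0 := by rw [map_sub, h, sub_self]
  have := D_eq_zero_iff_of_isHomogeneous k n hsub this
  exact sub_eq_zero.mp this

/-! ### Homogenization -/

noncomputable def homExt (m : ℕ) (α : Fin n →₀ ℕ) : Fin (n + 1) →₀ ℕ :=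
  Finsupp.mapDomain Fin.castSucc α + Finsupp.single (Fin.last n) (m - α.degree)

lemma homExt_castSucc (m : ℕ) (α : Fin n →₀ ℕ) (i : Fin n) :
    homExt n m α i.castSucc = α i := by
  rw [homExt, Finsupp.add_apply,
    Finsupp.mapDomain_apply (Fin.castSucc_injective n),
    Finsupp.single_apply, if_neg (Fin.castSucc_lt_last i).ne', add_zero]

lemma homExt_last (m : ℕ) (α : Fin n →₀ ℕ) :
    homExt n m α (Fin.last n) = m - α.degree := by
  rw [homExt, Finsupp.add_apply, Finsupp.mapDomain_notin_range, Finsupp.single_eq_same, zero_add]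
  rintro ⟨j, hj⟩
  exact (Fin.castSucc_lt_last j).ne hj

lemma res_homExt (m : ℕ) (α : Fin n →₀ ℕ) : res n (homExt n m α) = α := by
  ext i
  rw [res_apply, homExt_castSucc]

lemma homExt_degree {m : ℕ} {α : Fin n →₀ ℕ} (h : α.degree ≤ m) :
    (homExt n m α).degree = m := by
  have h1 := degree_res_add n (homExt n m α)
  rw [res_homExt, homExt_last] at h1
  omega

lemma homExt_inj (m : ℕ) : Function.Injective (homExt n m) := by
  intro a b h
  rw [← res_homExt n m a, h, res_homExt]

noncomputable def homz (m : ℕ) (p : MvPolynomial (Fin n) k) : MvPolynomial (Fin (n + 1)) k :=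
  ∑ α ∈ p.support, monomial (homExt n m α) (coeff α p)

lemma degree_le_totalDegree {p : MvPolynomial (Fin n) k} {α : Fin n →₀ ℕ}
    (h : α ∈ p.support) : α.degree ≤ p.totalDegree :=
  MvPolynomial.le_totalDegree h

lemma homz_isHomogeneous {m : ℕ} {p : MvPolynomial (Fin n) k} (hm : p.totalDegree ≤ m) :
    (homz k n m p).IsHomogeneous m :=
  IsHomogeneous.sum _ _ _ fun α hα => isHomogeneous_monomial _
    (homExt_degree n (le_trans (degree_le_totalDegree k n hα) hm))

lemma D_homz (m : ℕ) (p : MvPolynomial (Fin n) k) : D k n (homz k n m p) = p := by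
  rw [homz, map_sum]
  conv_rhs => rw [← support_sum_monomial_coeff p]
  exact Finset.sum_congr rfl fun α _ => by rw [D_monomial, res_homExt]

lemma homz_ne_zero {m : ℕ} {p : MvPolynomial (Fin n) k} (hp : p ≠ 0) : homz k n m p ≠ 0 := by
  intro h
  apply hp
  rw [← D_homz k n m p, h, map_zero]

lemma not_X_last_dvd_homz {p : MvPolynomial (Fin n) k} (hp : p ≠ 0) :
    ¬ (MvPolynomial.X (Fin.last n) ∣ homz k n p.totalDegree p) := by
  classical
  rintro ⟨h, hh⟩
  obtain ⟨α₀, hα₀mem, hα₀deg⟩ : ∃ α₀ ∈ p.support, p.totalDegree = α₀.degree := by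
    obtain ⟨α₀, hmem, hsup⟩ := Finset.exists_mem_eq_sup p.support
      (support_nonempty.mpr hp) (fun α => α.sum fun _ e => e)
    exact ⟨α₀, hmem, hsup⟩
  have hco : coeff (homExt n p.totalDegree α₀) (homz k n p.totalDegree p) = coeff α₀ p := by
    rw [homz, MvPolynomial.coeff_sum, Finset.sum_eq_single_of_mem α₀ hα₀mem]
    · rw [coeff_monomial, if_pos rfl]
    · intro β hβ hne
      rw [coeff_monomial, if_neg (fun hc => hne (homExt_inj n _ hc))]
  have hlast : homExt n p.totalDegree α₀ (Fin.last n) = 0 := by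
    rw [homExt_last]
    omega
  rw [hh] at hco
  rw [show MvPolynomial.X (Fin.last n) * h = h * MvPolynomial.X (Fin.last n) from mul_comm _ _]
    at hco
  rw [coeff_mul_X', if_neg (by simp [Finsupp.mem_support_iff, hlast])] at hco
  exact (mem_support_iff.mp hα₀mem) hco.symm

/-! ### Common divisors -/

lemma common_divisor_unit {p q : MvPolynomial (Fin n) k} (hrel : IsRelPrime p q)
    {A B W : MvPolynomial (Fin (n + 1)) k} {e : ℕ}
    (hW : W.IsHomogeneous e) (hW0 : W ≠ 0)
    (hfree : ¬ (MvPolynomial.X (Fin.last n) ∣ W))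
    (hDA : D k n A = p) (hDB : D k n B = q)
    {g : MvPolynomial (Fin (n + 1)) k} (hgA : g ∣ A) (hgB : g ∣ B) (hgW : g ∣ W) :
    IsUnit g := by
  obtain ⟨w, hw⟩ := hgW
  have hg0 : g ≠ 0 := by
    rintro rfl
    rw [zero_mul] at hw
    exact hW0 hw
  have hw0 : w ≠ 0 := by
    rintro rfl
    rw [mul_zero] at hw
    exact hW0 hw
  obtain ⟨r, s, hrs, hgh, -⟩ := isHomogeneous_of_mul_isHomogeneous hg0 hw0 (hw ▸ hW)
  have h1 : D k n g ∣ p := hDA ▸ map_dvd (D k n) hgA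
  have h2 : D k n g ∣ q := hDB ▸ map_dvd (D k n) hgB
  have hu : IsUnit (D k n g) := hrel h1 h2
  obtain ⟨γ, hγ⟩ := isUnit_exists_C hu
  have hγ0 : γ ≠ 0 := by
    rintro rfl
    rw [map_zero] at hγ
    rw [hγ] at hu
    exact not_isUnit_zero hu
  have hgeq : g = MvPolynomial.C γ * MvPolynomial.X (Fin.last n) ^ r := by
    apply D_inj_of_isHomogeneous k n hgh ((isHomogeneous_X_pow _ r).C_mul γ)
    rw [map_mul, map_pow, D_C, D_X_last, one_pow, mul_one, hγ]
  rcases Nat.eq_zero_or_pos r with hr | hr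
  · rw [hr, pow_zero, mul_one] at hgeq
    rw [hgeq]
    exact (isUnit_iff_ne_zero.mpr hγ0).map (MvPolynomial.C : k →+* _)
  · exfalso
    apply hfree
    have hx : (MvPolynomial.X (Fin.last n) : MvPolynomial (Fin (n + 1)) k) ^ r
        = MvPolynomial.X (Fin.last n) * MvPolynomial.X (Fin.last n) ^ (r - 1) := by
      conv_lhs => rw [show r = (r - 1) + 1 from by omega]
      rw [pow_succ']
    have h5 : MvPolynomial.X (Fin.last n) ∣ g :=
      ⟨MvPolynomial.C γ * MvPolynomial.X (Fin.last n) ^ (r - 1), by rw [hgeq, hx]; ring⟩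
    exact dvd_trans h5 ⟨w, hw⟩

/-! ### The core algebraic argument -/

lemma homog_cast {σ : Type*} {f : MvPolynomial σ k} {m m' : ℕ}
    (h : f.IsHomogeneous m) (e : m = m') : f.IsHomogeneous m' := e ▸ h

lemma core {L Q C A B : MvPolynomial (Fin (n + 1)) k} {e : ℕ}
    (hL : L.IsHomogeneous 1) (hQ : Q.IsHomogeneous 2) (hC : C.IsHomogeneous 3)
    (hL0 : L ≠ 0) (hC0 : C ≠ 0) (hirr : Irreducible (L + Q + C))
    (hA : A.IsHomogeneous e) (hB : B.IsHomogeneous (e + 1))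
    (hA0 : A ≠ 0) (hB0 : B ≠ 0) (hrel : IsRelPrime A B)
    (heq : L * B ^ 2 + Q * (A * B) + C * A ^ 2 = 0) : False := by
  have hALB : A ∣ L * B ^ 2 := ⟨-(Q * B + C * A), by linear_combination heq⟩
  have hAL : A ∣ L := (hrel.pow_right (n := 2)).dvd_of_dvd_mul_right hALB
  obtain ⟨E, hE⟩ := hAL
  have h2 : E * B ^ 2 + Q * B + C * A = 0 := by
    have h2' : A * (E * B ^ 2 + Q * B + C * A) = 0 := by
      rw [← heq, hE]; ring
    exact (mul_eq_zero.mp h2').resolve_left hA0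
  have hBCA : B ∣ C * A := ⟨-(E * B + Q), by linear_combination h2⟩
  have hBC : B ∣ C := hrel.symm.dvd_of_dvd_mul_right hBCA
  obtain ⟨C1, hC1⟩ := hBC
  have hQ' : Q = -(E * B + C1 * A) := by
    have h3 : B * (E * B + Q + C1 * A) = 0 := by
      rw [← h2, hC1]; ring
    have h4 := (mul_eq_zero.mp h3).resolve_left hB0
    linear_combination h4
  have hF : L + Q + C = (A - B) * (E - C1) := by
    rw [hE, hQ', hC1]; ring
  rcases hirr.isUnit_or_isUnit hF with h | h
  · obtain ⟨γ, hγ⟩ := isUnit_exists_C h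
    have hcomp : homogeneousComponent (e + 1) (A - B) = -B := by
      rw [map_sub, homogeneousComponent_of_mem (mem_homogeneousSubmodule _ _ |>.mpr hA),
        homogeneousComponent_of_mem (mem_homogeneousSubmodule _ _ |>.mpr hB),
        if_neg (by omega), if_pos rfl, zero_sub]
    rw [hγ] at hcomp
    rw [homogeneousComponent_of_mem (mem_homogeneousSubmodule _ _ |>.mpr (isHomogeneous_C _ γ)),
      if_neg (by omega)] at hcomp
    exact hB0 (neg_eq_zero.mp hcomp.symm)
  · obtain ⟨γ, hγ⟩ := isUnit_exists_C h
    rw [hγ] at hF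
    have hcompL : L = MvPolynomial.C γ *
        ((if 1 = e then A else 0) - (if 1 = e + 1 then B else 0)) := by
      have h5 : homogeneousComponent 1 (L + Q + C) = L := by
        rw [map_add, map_add,
          homogeneousComponent_of_mem (mem_homogeneousSubmodule _ _ |>.mpr hL),
          homogeneousComponent_of_mem (mem_homogeneousSubmodule _ _ |>.mpr hQ),
          homogeneousComponent_of_mem (mem_homogeneousSubmodule _ _ |>.mpr hC),
          if_pos rfl, if_neg (by omega), if_neg (by omega), add_zero, add_zero]
      rw [← h5, hF, mul_comm (A - B) (MvPolynomial.C γ), homogeneousComponent_C_mul, map_sub,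
        homogeneousComponent_of_mem (mem_homogeneousSubmodule _ _ |>.mpr hA),
        homogeneousComponent_of_mem (mem_homogeneousSubmodule _ _ |>.mpr hB)]
    have hcompC : C = MvPolynomial.C γ *
        ((if 3 = e then A else 0) - (if 3 = e + 1 then B else 0)) := by
      have h5 : homogeneousComponent 3 (L + Q + C) = C := by
        rw [map_add, map_add,
          homogeneousComponent_of_mem (mem_homogeneousSubmodule _ _ |>.mpr hL),
          homogeneousComponent_of_mem (mem_homogeneousSubmodule _ _ |>.mpr hQ),
          homogeneousComponent_of_mem (mem_homogeneousSubmodule _ _ |>.mpr hC),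
          if_pos rfl, if_neg (by omega), if_neg (by omega), zero_add, zero_add]
      rw [← h5, hF, mul_comm (A - B) (MvPolynomial.C γ), homogeneousComponent_C_mul, map_sub,
        homogeneousComponent_of_mem (mem_homogeneousSubmodule _ _ |>.mpr hA),
        homogeneousComponent_of_mem (mem_homogeneousSubmodule _ _ |>.mpr hB)]
    by_cases he1 : e ≤ 1
    · apply hC0
      rw [hcompC, if_neg (by omega), if_neg (by omega), sub_zero, mul_zero]
    · apply hL0
      rw [hcompL, if_neg (by omega), if_neg (by omega), sub_zero, mul_zero]

/-! ### No affine solutions -/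

lemma no_affine_solution
    {L Q C : MvPolynomial (Fin (n + 1)) k}
    (hL : L.IsHomogeneous 1) (hQ : Q.IsHomogeneous 2) (hC : C.IsHomogeneous 3)
    (hL0 : L ≠ 0) (hC0 : C ≠ 0) (hirr : Irreducible (L + Q + C))
    {p q : MvPolynomial (Fin n) k} (hq0 : q ≠ 0) (hrel : IsRelPrime p q)
    (heq : D k n L * q ^ 2 + D k n Q * (p * q) + D k n C * p ^ 2 = 0) : False := by
  have hDL0 : D k n L ≠ 0 := fun h => hL0 (D_eq_zero_iff_of_isHomogeneous k n hL h)
  have hp0 : p ≠ 0 := by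
    rintro rfl
    rw [zero_mul, mul_zero, add_zero, zero_pow (two_ne_zero), mul_zero, add_zero] at heq
    exact mul_ne_zero hDL0 (pow_ne_zero 2 hq0) heq
  rcases le_or_gt q.totalDegree p.totalDegree with hle | hlt
  · -- case `deg q ≤ deg p`
    have hA : (homz k n p.totalDegree p).IsHomogeneous p.totalDegree :=
      homz_isHomogeneous k n le_rfl
    have hBhom : (MvPolynomial.X (Fin.last n) ^ (p.totalDegree - q.totalDegree + 1) *
        homz k n q.totalDegree q).IsHomogeneous (p.totalDegree + 1) :=
      homog_cast k ((isHomogeneous_X_pow (Fin.last n) (p.totalDegree - q.totalDegree + 1)).mul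
        (homz_isHomogeneous k n le_rfl)) (by omega)
    have hDA : D k n (homz k n p.totalDegree p) = p := D_homz k n _ p
    have hDB : D k n (MvPolynomial.X (Fin.last n) ^ (p.totalDegree - q.totalDegree + 1) *
        homz k n q.totalDegree q) = q := by
      rw [map_mul, map_pow, D_X_last, one_pow, one_mul, D_homz]
    have hA0 : homz k n p.totalDegree p ≠ 0 := homz_ne_zero k n hp0
    have hB0 : MvPolynomial.X (Fin.last n) ^ (p.totalDegree - q.totalDegree + 1) *
        homz k n q.totalDegree q ≠ 0 := fun h => hq0 (by rw [← hDB, h, map_zero])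
    have hfree : ¬ (MvPolynomial.X (Fin.last n) ∣ homz k n p.totalDegree p) :=
      not_X_last_dvd_homz k n hp0
    have hcop : IsRelPrime (homz k n p.totalDegree p)
        (MvPolynomial.X (Fin.last n) ^ (p.totalDegree - q.totalDegree + 1) *
          homz k n q.totalDegree q) := fun g hgA hgB =>
      common_divisor_unit k n hrel hA hA0 hfree hDA hDB hgA hgB hgA
    have hhom : (L * (MvPolynomial.X (Fin.last n) ^ (p.totalDegree - q.totalDegree + 1) *
        homz k n q.totalDegree q) ^ 2
        + Q * (homz k n p.totalDegree p *
            (MvPolynomial.X (Fin.last n) ^ (p.totalDegree - q.totalDegree + 1) *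
              homz k n q.totalDegree q))
        + C * (homz k n p.totalDegree p) ^ 2).IsHomogeneous (2 * p.totalDegree + 3) := by
      refine IsHomogeneous.add (IsHomogeneous.add ?_ ?_) ?_
      · exact homog_cast k (hL.mul (hBhom.pow 2)) (by omega)
      · exact homog_cast k (hQ.mul (hA.mul hBhom)) (by omega)
      · exact homog_cast k (hC.mul (hA.pow 2)) (by omega)
    have heqS : L * (MvPolynomial.X (Fin.last n) ^ (p.totalDegree - q.totalDegree + 1) *
        homz k n q.totalDegree q) ^ 2
        + Q * (homz k n p.totalDegree p *
            (MvPolynomial.X (Fin.last n) ^ (p.totalDegree - q.totalDegree + 1) *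
              homz k n q.totalDegree q))
        + C * (homz k n p.totalDegree p) ^ 2 = 0 := by
      apply D_inj_of_isHomogeneous k n hhom (isHomogeneous_zero _ _ _)
      simp only [map_zero, map_add, map_mul, map_pow, D_X_last, D_homz, one_pow, one_mul]
      exact heq
    exact core k n hL hQ hC hL0 hC0 hirr hA hBhom hA0 hB0 hcop heqS
  · -- case `deg p < deg q`
    have hA : (MvPolynomial.X (Fin.last n) ^ (q.totalDegree - p.totalDegree - 1) *
        homz k n p.totalDegree p).IsHomogeneous (q.totalDegree - 1) :=
      homog_cast k ((isHomogeneous_X_pow (Fin.last n) (q.totalDegree - p.totalDegree - 1)).mul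
        (homz_isHomogeneous k n le_rfl)) (by omega)
    have hBhom : (homz k n q.totalDegree q).IsHomogeneous ((q.totalDegree - 1) + 1) :=
      homog_cast k (homz_isHomogeneous k n le_rfl) (by omega)
    have hDA : D k n (MvPolynomial.X (Fin.last n) ^ (q.totalDegree - p.totalDegree - 1) *
        homz k n p.totalDegree p) = p := by
      rw [map_mul, map_pow, D_X_last, one_pow, one_mul, D_homz]
    have hDB : D k n (homz k n q.totalDegree q) = q := D_homz k n _ q
    have hA0 : MvPolynomial.X (Fin.last n) ^ (q.totalDegree - p.totalDegree - 1) *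
        homz k n p.totalDegree p ≠ 0 := fun h => hp0 (by rw [← hDA, h, map_zero])
    have hB0 : homz k n q.totalDegree q ≠ 0 := homz_ne_zero k n hq0
    have hfree : ¬ (MvPolynomial.X (Fin.last n) ∣ homz k n q.totalDegree q) :=
      not_X_last_dvd_homz k n hq0
    have hBq : (homz k n q.totalDegree q).IsHomogeneous q.totalDegree :=
      homz_isHomogeneous k n le_rfl
    have hcop : IsRelPrime (MvPolynomial.X (Fin.last n) ^ (q.totalDegree - p.totalDegree - 1) *
        homz k n p.totalDegree p) (homz k n q.totalDegree q) := fun g hgA hgB =>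
      common_divisor_unit k n hrel hBq hB0 hfree hDA hDB hgA hgB hgB
    have hhom : (L * (homz k n q.totalDegree q) ^ 2
        + Q * ((MvPolynomial.X (Fin.last n) ^ (q.totalDegree - p.totalDegree - 1) *
            homz k n p.totalDegree p) * homz k n q.totalDegree q)
        + C * (MvPolynomial.X (Fin.last n) ^ (q.totalDegree - p.totalDegree - 1) *
            homz k n p.totalDegree p) ^ 2).IsHomogeneous (2 * q.totalDegree + 1) := by
      refine IsHomogeneous.add (IsHomogeneous.add ?_ ?_) ?_
      · exact homog_cast k (hL.mul (hBq.pow 2)) (by omega)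
      · exact homog_cast k (hQ.mul (hA.mul hBq)) (by omega)
      · exact homog_cast k (hC.mul (hA.pow 2)) (by omega)
    have heqS : L * (homz k n q.totalDegree q) ^ 2
        + Q * ((MvPolynomial.X (Fin.last n) ^ (q.totalDegree - p.totalDegree - 1) *
            homz k n p.totalDegree p) * homz k n q.totalDegree q)
        + C * (MvPolynomial.X (Fin.last n) ^ (q.totalDegree - p.totalDegree - 1) *
            homz k n p.totalDegree p) ^ 2 = 0 := by
      apply D_inj_of_isHomogeneous k n hhom (isHomogeneous_zero _ _ _)
      simp only [map_zero, map_add, map_mul, map_pow, D_X_last, D_homz, one_pow, one_mul]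
      exact heq
    exact core k n hL hQ hC hL0 hC0 hirr hA hBhom hA0 hB0 hcop heqS

end CubicAux

set_option maxHeartbeats 1000000 in
set_option synthInstance.maxHeartbeats 400000 in
/-- Let `X ⊂ 𝔸^{n+1}` be an irreducible cubic hypersurface `F = L + Q + C = 0` (with
`L, Q, C` the homogeneous parts of degrees 1, 2, 3), smooth at the origin (`L ≠ 0`).
Over the field `K = k(u_1,…,u_n)` of a generic direction `u`, the quadratic equation
`L(u,1) + τ·Q(u,1) + τ²·C(u,1) = 0` — whose roots parametrize the two further
intersection points of the line `τ ↦ (τu, τ)` with `X` — is irreducible. -/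
theorem generic_line_quadratic_irreducible
    {k : Type*} [Field k] {n : ℕ}
    (L Q C : MvPolynomial (Fin (n + 1)) k)
    (hL : L.IsHomogeneous 1) (hQ : Q.IsHomogeneous 2) (hC : C.IsHomogeneous 3)
    (hL0 : L ≠ 0) (hC0 : C ≠ 0)
    (hirr : Irreducible (L + Q + C))
    (φ : Fin (n + 1) → FractionRing (MvPolynomial (Fin n) k))
    (hφ : ∀ i : Fin (n + 1), φ i = if h : (i : ℕ) < n then
      algebraMap (MvPolynomial (Fin n) k) (FractionRing (MvPolynomial (Fin n) k))
        (MvPolynomial.X ⟨i, h⟩) else 1) :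
    Irreducible (Polynomial.C (MvPolynomial.eval φ
        (MvPolynomial.map (algebraMap k (FractionRing (MvPolynomial (Fin n) k))) L)) +
      Polynomial.C (MvPolynomial.eval φ
        (MvPolynomial.map (algebraMap k (FractionRing (MvPolynomial (Fin n) k))) Q)) *
        Polynomial.X +
      Polynomial.C (MvPolynomial.eval φ
        (MvPolynomial.map (algebraMap k (FractionRing (MvPolynomial (Fin n) k))) C)) *
        Polynomial.X ^ 2) := by
  classical
  have key : ∀ f : MvPolynomial (Fin (n + 1)) k,
      MvPolynomial.eval φ
        (MvPolynomial.map (algebraMap k (FractionRing (MvPolynomial (Fin n) k))) f)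
      = algebraMap (MvPolynomial (Fin n) k) (FractionRing (MvPolynomial (Fin n) k))
          (CubicAux.D k n f) := by
    intro f
    have h1 : (algebraMap (MvPolynomial (Fin n) k)
        (FractionRing (MvPolynomial (Fin n) k))).comp (MvPolynomial.C)
        = algebraMap k (FractionRing (MvPolynomial (Fin n) k)) := by
      rw [← MvPolynomial.algebraMap_eq, ← IsScalarTower.algebraMap_eq]
    have h2 : (algebraMap (MvPolynomial (Fin n) k) (FractionRing (MvPolynomial (Fin n) k)))
        ∘ (fun i : Fin (n + 1) => if h : (i : ℕ) < n then
            (MvPolynomial.X ⟨i, h⟩ : MvPolynomial (Fin n) k) else 1) = φ := by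
      funext i
      rw [hφ i, Function.comp_apply]
      by_cases h : (i : ℕ) < n
      · rw [dif_pos h, dif_pos h]
      · rw [dif_neg h, dif_neg h, map_one]
    rw [MvPolynomial.eval_map, CubicAux.D_apply, MvPolynomial.eval₂_comp_left, h1, h2]
  rw [key L, key Q, key C]
  set aK := algebraMap (MvPolynomial (Fin n) k) (FractionRing (MvPolynomial (Fin n) k))
    (CubicAux.D k n C) with haK
  set bK := algebraMap (MvPolynomial (Fin n) k) (FractionRing (MvPolynomial (Fin n) k))
    (CubicAux.D k n Q) with hbK
  set cK := algebraMap (MvPolynomial (Fin n) k) (FractionRing (MvPolynomial (Fin n) k))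
    (CubicAux.D k n L) with hcK
  have hinj := IsFractionRing.injective (MvPolynomial (Fin n) k)
    (FractionRing (MvPolynomial (Fin n) k))
  have hDC0 : CubicAux.D k n C ≠ 0 := fun h =>
    hC0 (CubicAux.D_eq_zero_iff_of_isHomogeneous k n hC h)
  have haK0 : aK ≠ 0 := fun h => hDC0 ((map_eq_zero_iff _ hinj).mp (haK ▸ h))
  set P : Polynomial (FractionRing (MvPolynomial (Fin n) k)) :=
    Polynomial.C cK + Polynomial.C bK * Polynomial.X + Polynomial.C aK * Polynomial.X ^ 2
    with hP
  have hdeg : P.natDegree = 2 := by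
    rw [hP, show Polynomial.C cK + Polynomial.C bK * Polynomial.X +
        Polynomial.C aK * Polynomial.X ^ 2
      = Polynomial.C aK * Polynomial.X ^ 2 + Polynomial.C bK * Polynomial.X +
        Polynomial.C cK from by ring]
    exact Polynomial.natDegree_quadratic haK0
  have noroot : ∀ τ : FractionRing (MvPolynomial (Fin n) k), ¬ P.IsRoot τ := by
    intro τ hroot
    obtain ⟨x, y, hy, hxy⟩ := IsFractionRing.div_surjective (A := MvPolynomial (Fin n) k) τ
    have hy0 : y ≠ 0 := nonZeroDivisors.ne_zero hy
    obtain ⟨p', q', c', hrel, hcx, hcy⟩ :=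
      UniqueFactorizationMonoid.exists_reduced_factors' x y hy0
    have hc'0 : c' ≠ 0 := fun h => hy0 (by rw [← hcy, h, zero_mul])
    have hq'0 : q' ≠ 0 := fun h => hy0 (by rw [← hcy, h, mul_zero])
    have hq'K : algebraMap (MvPolynomial (Fin n) k) (FractionRing (MvPolynomial (Fin n) k)) q'
        ≠ 0 := fun h => hq'0 ((map_eq_zero_iff _ hinj).mp h)
    have hc'K : algebraMap (MvPolynomial (Fin n) k) (FractionRing (MvPolynomial (Fin n) k)) c'
        ≠ 0 := fun h => hc'0 ((map_eq_zero_iff _ hinj).mp h)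
    have hτ : τ = algebraMap (MvPolynomial (Fin n) k) (FractionRing (MvPolynomial (Fin n) k)) p'
        / algebraMap (MvPolynomial (Fin n) k) (FractionRing (MvPolynomial (Fin n) k)) q' := by
      rw [← hxy, ← hcx, ← hcy, map_mul, map_mul, mul_div_mul_left _ _ hc'K]
    have hev : cK + bK * τ + aK * τ ^ 2 = 0 := by
      have h0 := hroot
      rw [hP] at h0
      simpa [Polynomial.IsRoot, Polynomial.eval_add, Polynomial.eval_mul, Polynomial.eval_pow,
        Polynomial.eval_C, Polynomial.eval_X] using h0
    have hR : CubicAux.D k n L * q' ^ 2 + CubicAux.D k n Q * (p' * q')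
        + CubicAux.D k n C * p' ^ 2 = 0 := by
      apply hinj
      simp only [map_zero, map_add, map_mul, map_pow]
      rw [← haK, ← hbK, ← hcK]
      have hexpand : cK * (algebraMap (MvPolynomial (Fin n) k)
            (FractionRing (MvPolynomial (Fin n) k)) q') ^ 2
          + bK * ((algebraMap (MvPolynomial (Fin n) k)
              (FractionRing (MvPolynomial (Fin n) k)) p')
            * (algebraMap (MvPolynomial (Fin n) k)
              (FractionRing (MvPolynomial (Fin n) k)) q'))
          + aK * (algebraMap (MvPolynomial (Fin n) k)
            (FractionRing (MvPolynomial (Fin n) k)) p') ^ 2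
          = (cK + bK * τ + aK * τ ^ 2) * (algebraMap (MvPolynomial (Fin n) k)
            (FractionRing (MvPolynomial (Fin n) k)) q') ^ 2 := by
        rw [hτ]
        field_simp
      rw [hexpand, hev, zero_mul]
    exact CubicAux.no_affine_solution k n hL hQ hC hL0 hC0 hirr hq'0 hrel hR
  constructor
  · exact fun hu => Polynomial.not_isUnit_of_natDegree_pos P (by omega) hu
  · intro f g hfg
    by_contra hcon
    push_neg at hcon
    obtain ⟨hfu, hgu⟩ := hcon
    have hP0 : P ≠ 0 := fun h => by rw [h] at hdeg; simp at hdeg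
    have hf0 : f ≠ 0 := fun h => hP0 (by rw [hfg, h, zero_mul])
    have hg0 : g ≠ 0 := fun h => hP0 (by rw [hfg, h, mul_zero])
    have hsum : f.natDegree + g.natDegree = 2 := by
      rw [← Polynomial.natDegree_mul hf0 hg0, ← hfg, hdeg]
    have hfpos : 0 < f.natDegree := by
      rcases Nat.eq_zero_or_pos f.natDegree with h0 | h
      · exfalso
        apply hfu
        rw [Polynomial.eq_C_of_natDegree_eq_zero h0]
        refine Polynomial.isUnit_C.mpr (isUnit_iff_ne_zero.mpr fun hc => hf0 ?_)
        rw [Polynomial.eq_C_of_natDegree_eq_zero h0, hc, map_zero]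
      · exact h
    have hgpos : 0 < g.natDegree := by
      rcases Nat.eq_zero_or_pos g.natDegree with h0 | h
      · exfalso
        apply hgu
        rw [Polynomial.eq_C_of_natDegree_eq_zero h0]
        refine Polynomial.isUnit_C.mpr (isUnit_iff_ne_zero.mpr fun hc => hg0 ?_)
        rw [Polynomial.eq_C_of_natDegree_eq_zero h0, hc, map_zero]
      · exact h
    have hf1 : f.natDegree = 1 := by omega
    have hfdeg : f.degree = 1 := by
      rw [Polynomial.degree_eq_natDegree hf0, hf1]
      rfl
    obtain ⟨τ, hτ⟩ := Polynomial.exists_root_of_degree_eq_one hfdeg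
    apply noroot τ
    rw [Polynomial.IsRoot, hfg, Polynomial.eval_mul, hτ.eq_zero, zero_mul]
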